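/- Let f : X → 𝒢(Z,C) be a convex function, x, u ∈ X, and define g : (0,∞) → 𝒢(Z,C) by g(t) = (1/t)·(f(x + tu) ⊖ f(x)). Then for all 0 < s ≤ t one has g(s) ⊇ g(t). -/

import Mathlib

open Set Pointwise

noncomputable section

variable {Z : Type*} [AddCommGroup Z] [Module ℝ Z] [TopologicalSpace Z]

/-- The inf-residual `A ⊖ B = {z : B + {z} ⊆ A}`. -/
def resid (A B : Set Z) : Set Z := {z : Z | B + {z} ⊆ A}

/-- The recession cone `0⁺A`, with the convention `0⁺∅ = ∅`. -/
def recCone (A : Set Z) : Set Z := {z : Z | A.Nonempty ∧ A + {z} ⊆ A}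

/-- `A ⊕ B = cl (A + B)`. -/
def oplus (A B : Set Z) : Set Z := closure (A + B)

/-- Membership in `𝒢(Z,C)`: `A = cl co (A + C)`. -/
def IsG (C A : Set Z) : Prop := A = closure (convexHull ℝ (A + C))

/-- The set `C⁻ \ {0}` of nonzero elements of the negative dual cone. -/
def negDualNZ (C : Set Z) : Set (Z →L[ℝ] ℝ) :=
  {p : Z →L[ℝ] ℝ | (∀ c ∈ C, p c ≤ 0) ∧ p ≠ 0}

/-- `inf {-z*(z) : z ∈ A}` as an extended real. -/
def scal (p : Z →L[ℝ] ℝ) (A : Set Z) : EReal :=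
  sInf ((fun z => ((-(p z) : ℝ) : EReal)) '' A)

/-- Support function `σ(z*|A) = sup {z*(z) : z ∈ A}` as an extended real. -/
def suppF (p : Z →L[ℝ] ℝ) (A : Set Z) : EReal :=
  sSup ((fun z => ((p z : ℝ) : EReal)) '' A)

/-- Inf-residuation on the extended reals: `r ⊖ s = inf {t ∈ ℝ : r ≤ s + t}`. -/
def eresid (r s : EReal) : EReal :=
  sInf ((fun t : ℝ => (t : EReal)) '' {t : ℝ | r ≤ s + (t : EReal)})

variable {X : Type*} [AddCommGroup X] [Module ℝ X]

/-- The scalarization `φ_{f,z*}(x) = inf {-z*(z) : z ∈ f(x)}`. -/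
def phi (f : X → Set Z) (p : Z →L[ℝ] ℝ) (x : X) : EReal := scal p (f x)

/-- Convexity for set-valued functions:
`f(t x₁ + (1-t) x₂) ⊇ cl (t f(x₁) + (1-t) f(x₂))`. -/
def ConvexSV (f : X → Set Z) : Prop :=
  ∀ x₁ x₂ : X, ∀ t : ℝ, t ∈ Ioo (0:ℝ) 1 →
    closure (t • f x₁ + (1 - t) • f x₂) ⊆ f (t • x₁ + (1 - t) • x₂)

/-- The set-valued directional derivative
`f′(x,u) = ⋂_{t₀>0} cl co ⋃_{0<t<t₀} (1/t)•(f(x+tu) ⊖ f(x))`. -/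
def sder (f : X → Set Z) (x u : X) : Set Z :=
  ⋂ t₀ ∈ Ioi (0:ℝ), closure (convexHull ℝ
    (⋃ t ∈ Ioo (0:ℝ) t₀, (1 / t) • resid (f (x + t • u)) (f x)))

/-- The scalar Dini derivative `φ′_{f,z*}(x,u) = inf_{t>0} (1/t)(φ(x+tu) ⊖ φ(x))`. -/
def phiDer (f : X → Set Z) (p : Z →L[ℝ] ℝ) (x u : X) : EReal :=
  ⨅ t ∈ Ioi (0:ℝ), (((1 / t : ℝ)) : EReal) * eresid (phi f p (x + t • u)) (phi f p x)

end


theorem stmt_7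
  {Z : Type*} [AddCommGroup Z] [Module ℝ Z] [TopologicalSpace Z]
  [IsTopologicalAddGroup Z] [ContinuousSMul ℝ Z] [LocallyConvexSpace ℝ Z] [T2Space Z]
  {X : Type*} [AddCommGroup X] [Module ℝ X]
  (C : Set Z) (hCclosed : IsClosed C) (hCconv : Convex ℝ C)
  (hCcone : ∀ c ∈ C, ∀ r : ℝ, 0 < r → r • c ∈ C) (hC0 : (0:Z) ∈ C)
  (f : X → Set Z) (hG : ∀ x, IsG C (f x)) (hf : ConvexSV f) (x u : X)
  (s t : ℝ) (hs : 0 < s) (hst : s ≤ t) :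
    (1 / t) • resid (f (x + t • u)) (f x) ⊆ (1 / s) • resid (f (x + s • u)) (f x) := by
  rcases eq_or_lt_of_le hst with rfl | hlt
  · exact subset_rfl
  have ht : 0 < t := hs.trans hlt
  intro z hz
  rw [Set.mem_smul_set] at hz
  obtain ⟨w, hw, rfl⟩ := hz
  rw [Set.mem_smul_set]
  have hlam : s / t ∈ Ioo (0:ℝ) 1 := ⟨div_pos hs ht, (div_lt_one ht).2 hlt⟩
  refine ⟨(s / t) • w, ?_, ?_⟩
  · intro y hy
    rw [Set.add_singleton] at hy
    obtain ⟨a, ha, rfl⟩ := hy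
    have key := hf (x + t • u) x (s / t) hlam
    have hpt : (s / t) • (x + t • u) + (1 - s / t) • x = x + s • u := by
      rw [smul_add, smul_smul, div_mul_cancel₀ _ ht.ne', sub_smul, one_smul]
      abel
    rw [hpt] at key
    apply key
    apply subset_closure
    rw [Set.mem_add]
    refine ⟨(s / t) • (a + w), ?_, (1 - s / t) • a, ?_, ?_⟩
    · exact Set.smul_mem_smul_set (hw (by rw [Set.add_singleton]; exact ⟨a, ha, rfl⟩))
    · exact Set.smul_mem_smul_set ha
    · rw [smul_add, sub_smul, one_smul]; abel
  · rw [smul_smul]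
    congr 1
    field_simp
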